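/- arXiv:1702.08366 — 5 statements merged into one kernel-verified Lean document; each statement's English description precedes it below -/
import Mathlib

section
/- Let A and B be positive semidefinite symmetric n×n real matrices. Then det(A+B)^(1/n) ≥ (det A)^(1/n) + (det B)^(1/n). -/
open Matrix Finset

/-- Superadditivity of the geometric mean. -/
lemma geom_superadd {n : ℕ} (hn : 0 < n) (a b : Fin n → ℝ)
    (ha : ∀ i, 0 ≤ a i) (hb : ∀ i, 0 ≤ b i) :
    (∏ i, a i) ^ ((1 : ℝ) / n) + (∏ i, b i) ^ ((1 : ℝ) / n)
      ≤ (∏ i, (a i + b i)) ^ ((1 : ℝ) / n) := by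
  have hn' : (0 : ℝ) < n := Nat.cast_pos.mpr hn
  have hw : (1 : ℝ) / n ≠ 0 := by positivity
  by_cases hz : ∃ i, a i + b i = 0
  · obtain ⟨i, hi⟩ := hz
    have hai : a i = 0 := by nlinarith [ha i, hb i]
    have hbi : b i = 0 := by nlinarith [ha i, hb i]
    rw [Finset.prod_eq_zero (mem_univ i) hai, Finset.prod_eq_zero (mem_univ i) hbi,
      Real.zero_rpow hw, add_zero]
    exact Real.rpow_nonneg (prod_nonneg fun j _ => add_nonneg (ha j) (hb j)) _
  push_neg at hz
  have hpos : ∀ i, 0 < a i + b i := fun i => lt_of_le_of_ne (add_nonneg (ha i) (hb i)) (Ne.symm (hz i))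
  set P := (∏ i, (a i + b i)) ^ ((1 : ℝ) / n) with hP
  have hPnn : 0 ≤ P := Real.rpow_nonneg (prod_nonneg fun i _ => (hpos i).le) _
  have key : ∀ c : Fin n → ℝ, (∀ i, 0 ≤ c i) →
      (∏ i, c i) ^ ((1 : ℝ) / n) ≤ (∑ i, (1 / n : ℝ) * (c i / (a i + b i))) * P := by
    intro c hc
    have h1 : (∏ i, c i) ^ ((1 : ℝ) / n)
        = (∏ i, (c i / (a i + b i))) ^ ((1 : ℝ) / n) * P := by
      rw [hP, ← Real.mul_rpow (prod_nonneg fun i _ => div_nonneg (hc i) (hpos i).le)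
        (prod_nonneg fun i _ => (hpos i).le), ← Finset.prod_mul_distrib]
      congr 1
      refine Finset.prod_congr rfl fun i _ => ?_
      rw [div_mul_eq_mul_div, mul_div_assoc, div_self (hpos i).ne', mul_one]
    rw [h1]
    refine mul_le_mul_of_nonneg_right ?_ hPnn
    have h2 : (∏ i, (c i / (a i + b i))) ^ ((1 : ℝ) / n)
        = ∏ i, (c i / (a i + b i)) ^ ((1 : ℝ) / n) :=
      (Real.finset_prod_rpow _ _ (fun i _ => div_nonneg (hc i) (hpos i).le) _).symm
    rw [h2]
    refine Real.geom_mean_le_arith_mean_weighted univ (fun _ => (1 / n : ℝ)) _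
      (fun i _ => by positivity) ?_ (fun i _ => div_nonneg (hc i) (hpos i).le)
    rw [Finset.sum_const, Finset.card_univ, Fintype.card_fin, nsmul_eq_mul]
    field_simp
  have hsum : (∑ i, (1 / n : ℝ) * (a i / (a i + b i)))
      + (∑ i, (1 / n : ℝ) * (b i / (a i + b i))) = 1 := by
    rw [← Finset.sum_add_distrib]
    have h3 : ∀ i ∈ univ, (1 / n : ℝ) * (a i / (a i + b i))
        + (1 / n : ℝ) * (b i / (a i + b i)) = 1 / n := by
      intro i _
      have h4 := (hpos i).ne'
      field_simp
    rw [Finset.sum_congr rfl h3, Finset.sum_const, Finset.card_univ, Fintype.card_fin,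
      nsmul_eq_mul]
    field_simp
  calc (∏ i, a i) ^ ((1 : ℝ) / n) + (∏ i, b i) ^ ((1 : ℝ) / n)
      ≤ (∑ i, (1 / n : ℝ) * (a i / (a i + b i))) * P
        + (∑ i, (1 / n : ℝ) * (b i / (a i + b i))) * P :=
        add_le_add (key a ha) (key b hb)
    _ = 1 * P := by rw [← add_mul, hsum]
    _ = P := one_mul P

lemma det_one_add_eq {n : ℕ} (M : Matrix (Fin n) (Fin n) ℝ) (hM : M.IsHermitian) :
    (1 + M).det = ∏ i, (1 + hM.eigenvalues i) := by
  have hU1 : (hM.eigenvectorUnitary : Matrix (Fin n) (Fin n) ℝ)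
      * star (hM.eigenvectorUnitary : Matrix (Fin n) (Fin n) ℝ) = 1 :=
    Matrix.mem_unitaryGroup_iff.mp hM.eigenvectorUnitary.2
  have hdec : 1 + M = (hM.eigenvectorUnitary : Matrix (Fin n) (Fin n) ℝ)
      * (1 + diagonal (RCLike.ofReal ∘ hM.eigenvalues))
      * star (hM.eigenvectorUnitary : Matrix (Fin n) (Fin n) ℝ) := by
    rw [mul_add, mul_one, add_mul, hU1, ← Unitary.conjStarAlgAut_apply (S := ℝ), ← hM.spectral_theorem]
  rw [hdec, det_mul_right_comm, hU1, one_mul, ← diagonal_one, diagonal_add, det_diagonal]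
  simp

open scoped MatrixOrder in
lemma stmt0_posdef {n : ℕ} (hn : 0 < n) (A B : Matrix (Fin n) (Fin n) ℝ)
    (hA : A.PosDef) (hB : B.PosSemidef) :
    A.det ^ ((1 : ℝ) / n) + B.det ^ ((1 : ℝ) / n) ≤ (A + B).det ^ ((1 : ℝ) / n) := by
  set S := CFC.sqrt A with hSdef
  have hS : S.PosSemidef := (CFC.sqrt_nonneg A).posSemidef
  have hSS : S * S = A := CFC.sqrt_mul_sqrt_self A hA.posSemidef.nonneg
  have hdS : S.det ≠ 0 := by
    intro h
    have : A.det = 0 := by rw [← hSS, det_mul, h, zero_mul]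
    exact hA.det_pos.ne' this
  have h1 : S⁻¹ * S = 1 := Matrix.nonsing_inv_mul _ hdS.isUnit
  have h2 : S * S⁻¹ = 1 := Matrix.mul_nonsing_inv _ hdS.isUnit
  set M := S⁻¹ * B * S⁻¹ with hMdef
  have hM : M.PosSemidef := by
    have h3 := hB.conjTranspose_mul_mul_same S⁻¹
    rwa [hS.1.inv.eq] at h3
  have hSM : S * M * S = B := by
    simp only [hMdef, Matrix.mul_assoc, h1, Matrix.mul_one]
    rw [← Matrix.mul_assoc, h2, Matrix.one_mul]
  have hdecomp : A + B = S * (1 + M) * S := by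
    rw [mul_add, mul_one, add_mul, hSS, hSM]
  have hdet1 : (A + B).det = A.det * (1 + M).det := by
    rw [hdecomp, ← hSS]; simp only [det_mul]; ring
  have hdet2 : B.det = A.det * M.det := by
    rw [← hSM, ← hSS]; simp only [det_mul]; ring
  set μ := hM.1.eigenvalues with hμdef
  have hμ : ∀ i, 0 ≤ μ i := hM.eigenvalues_nonneg
  have hMdet : M.det = ∏ i, μ i := by simpa using hM.1.det_eq_prod_eigenvalues
  have h1M : (1 + M).det = ∏ i, (1 + μ i) := det_one_add_eq M hM.1
  have hAdet : (0 : ℝ) < A.det := hA.det_pos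
  have hgeom := geom_superadd hn (fun _ => 1) μ (fun _ => zero_le_one) hμ
  simp only [Finset.prod_const_one, Real.one_rpow] at hgeom
  calc A.det ^ ((1 : ℝ) / n) + B.det ^ ((1 : ℝ) / n)
      = A.det ^ ((1 : ℝ) / n) * (1 + (∏ i, μ i) ^ ((1 : ℝ) / n)) := by
        rw [mul_add, mul_one, hdet2, hMdet,
          Real.mul_rpow hAdet.le (Finset.prod_nonneg fun i _ => hμ i)]
    _ ≤ A.det ^ ((1 : ℝ) / n) * (∏ i, (1 + μ i)) ^ ((1 : ℝ) / n) :=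
        mul_le_mul_of_nonneg_left hgeom (Real.rpow_nonneg hAdet.le _)
    _ = (A + B).det ^ ((1 : ℝ) / n) := by
        rw [hdet1, h1M, Real.mul_rpow hAdet.le
          (Finset.prod_nonneg fun i _ => by nlinarith [hμ i])]

lemma posdef_of_det_ne_zero {n : ℕ} {A : Matrix (Fin n) (Fin n) ℝ}
    (hA : A.PosSemidef) (hd : A.det ≠ 0) : A.PosDef := by
  refine ⟨hA.1, fun x hx => ?_⟩
  refine lt_of_le_of_ne (hA.2 x) fun h => hx ?_
  have hAx : A *ᵥ x = 0 := (hA.dotProduct_mulVec_zero_iff x).mp (by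
    simpa [dotProduct, mulVec, Finsupp.sum_fintype, Finset.mul_sum, mul_assoc] using h.symm)
  have hinj : Function.Injective (A.mulVec) :=
    Matrix.mulVec_injective_iff_isUnit.mpr ((Matrix.isUnit_iff_isUnit_det A).mpr hd.isUnit)
  have : A *ᵥ x = A *ᵥ 0 := by rw [hAx, Matrix.mulVec_zero]
  exact Finsupp.coe_eq_zero.mp (hinj this)

lemma psd_det_nonneg {n : ℕ} {A : Matrix (Fin n) (Fin n) ℝ}
    (hA : A.PosSemidef) : 0 ≤ A.det := by
  have h := hA.1.det_eq_prod_eigenvalues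
  rw [h]
  exact Finset.prod_nonneg fun i _ => by simpa using hA.eigenvalues_nonneg i

theorem stmt0 {n : ℕ} (hn : 0 < n) (A B : Matrix (Fin n) (Fin n) ℝ)
    (hA : A.PosSemidef) (hB : B.PosSemidef) :
    A.det ^ ((1 : ℝ) / n) + B.det ^ ((1 : ℝ) / n) ≤ (A + B).det ^ ((1 : ℝ) / n) := by
  have hw : (1 : ℝ) / n ≠ 0 := by
    have : (0 : ℝ) < n := Nat.cast_pos.mpr hn
    positivity
  rcases eq_or_ne A.det 0 with hAd | hAd
  · rcases eq_or_ne B.det 0 with hBd | hBd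
    · rw [hAd, hBd, Real.zero_rpow hw, add_zero]
      exact Real.rpow_nonneg (psd_det_nonneg (hA.add hB)) _
    · rw [add_comm A B, add_comm (A.det ^ ((1 : ℝ) / n))]
      exact stmt0_posdef hn B A (posdef_of_det_ne_zero hB hBd) hA
  · exact stmt0_posdef hn A B (posdef_of_det_ne_zero hA hAd) hB
end

section
/- Let A and B be positive semidefinite symmetric n×n real matrices. Then det A · det B ≤ (trace(A·B)/n)^n. -/
open Matrix Finset

lemma trace_eq_sum_eigenvalues {n : ℕ} {M : Matrix (Fin n) (Fin n) ℝ}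
    (hM : M.IsHermitian) : M.trace = ∑ i, hM.eigenvalues i := by
  simpa using hM.trace_eq_sum_eigenvalues

lemma psd_det_le {n : ℕ} (hn : 0 < n) {M : Matrix (Fin n) (Fin n) ℝ}
    (hM : M.PosSemidef) : M.det ≤ (M.trace / n) ^ n := by
  have h1 : M.det = ∏ i, hM.1.eigenvalues i := by
    have := hM.1.det_eq_prod_eigenvalues
    simpa using this
  have h2 : M.trace = ∑ i, hM.1.eigenvalues i := trace_eq_sum_eigenvalues hM.1
  rw [h1, h2]
  have hw : ∑ _i : Fin n, (1 / n : ℝ) = 1 := by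
    simp [Finset.sum_const]
    field_simp
  have hgm := Real.geom_mean_le_arith_mean_weighted Finset.univ (fun _ => (1 / n : ℝ))
    (fun i => hM.1.eigenvalues i) (fun i _ => by positivity)
    hw (fun i _ => hM.eigenvalues_nonneg i)
  have hpow : (∏ i, hM.1.eigenvalues i ^ (1 / n : ℝ)) ^ n = ∏ i, hM.1.eigenvalues i := by
    rw [← Finset.prod_pow]
    refine Finset.prod_congr rfl fun i _ => ?_
    rw [← Real.rpow_natCast (hM.1.eigenvalues i ^ (1 / n : ℝ)) n,
      ← Real.rpow_mul (hM.eigenvalues_nonneg i), one_div,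
      inv_mul_cancel₀ (by positivity : (n : ℝ) ≠ 0), Real.rpow_one]
  calc ∏ i, hM.1.eigenvalues i
      = (∏ i, hM.1.eigenvalues i ^ (1 / n : ℝ)) ^ n := hpow.symm
    _ ≤ (∑ i, (1 / n : ℝ) * hM.1.eigenvalues i) ^ n := by
        exact pow_le_pow_left₀ (Finset.prod_nonneg fun i _ =>
          Real.rpow_nonneg (hM.eigenvalues_nonneg i) _) hgm n
    _ = ((∑ i, hM.1.eigenvalues i) / n) ^ n := by
        rw [← Finset.mul_sum]
        ring

theorem stmt2 {n : ℕ} (hn : 0 < n) (A B : Matrix (Fin n) (Fin n) ℝ)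
    (hA : A.PosSemidef) (hB : B.PosSemidef) :
    A.det * B.det ≤ ((A * B).trace / n) ^ n := by
  obtain ⟨S, hSpsd, hSS⟩ : ∃ S : Matrix (Fin n) (Fin n) ℝ, S.PosSemidef ∧ S * S = A := by
    open scoped MatrixOrder in
    exact ⟨CFC.sqrt A, (CFC.sqrt_nonneg A).posSemidef, CFC.sqrt_mul_sqrt_self A hA.nonneg⟩
  have hM : (S * B * S).PosSemidef := by
    have := hB.mul_mul_conjTranspose_same S
    rwa [hSpsd.1.eq] at this  -- conjTranspose S = S? need Sᴴ = S
  have htr : (S * B * S).trace = (A * B).trace := by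
    rw [trace_mul_cycle, show S * S = A from hSS]
  have hdet : (S * B * S).det = A.det * B.det := by
    rw [det_mul, det_mul, show A = S * S from hSS.symm, det_mul]
    ring
  calc A.det * B.det = (S * B * S).det := hdet.symm
    _ ≤ ((S * B * S).trace / n) ^ n := psd_det_le hn hM
    _ = ((A * B).trace / n) ^ n := by rw [htr]
end

section
/- Let Ω ⊂ ℝ^n be open and bounded, u : Ω → ℝ continuous. The set of vectors p ∈ ℝ^n that are subgradients of u at two distinct points of Ω has Lebesgue measure zero. -/
open Matrix MeasureTheory

theorem stmt9 {n : ℕ} (Ω : Set (Fin n → ℝ)) (hΩo : IsOpen Ω) (hΩb : Bornology.IsBounded Ω)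
    (u : (Fin n → ℝ) → ℝ) (hu : ContinuousOn u Ω) :
    volume {p : Fin n → ℝ | ∃ x ∈ Ω, ∃ y ∈ Ω, x ≠ y ∧
      (∀ z ∈ Ω, u x + p ⬝ᵥ (z - x) ≤ u z) ∧ (∀ z ∈ Ω, u y + p ⬝ᵥ (z - y) ≤ u z)} = 0 := by
  set S : Set (Fin n → ℝ) := {p : Fin n → ℝ | ∃ x ∈ Ω, ∃ y ∈ Ω, x ≠ y ∧
      (∀ z ∈ Ω, u x + p ⬝ᵥ (z - x) ≤ u z) ∧ (∀ z ∈ Ω, u y + p ⬝ᵥ (z - y) ≤ u z)} with hSdef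
  rcases Set.eq_empty_or_nonempty S with hS | ⟨p0, x0, hx0, y0, hy0, hne0, hs0, hs0'⟩
  · rw [hS]; exact measure_empty
  -- bound on Ω
  obtain ⟨R, hR⟩ := hΩb.exists_norm_le
  have hR0 : 0 ≤ R := le_trans (norm_nonneg x0) (hR x0 hx0)
  -- dot product bound
  have hdot : ∀ (v z : Fin n → ℝ), z ∈ Ω → |v ⬝ᵥ z| ≤ (n * R) * ‖v‖ := by
    intro v z hz
    calc |v ⬝ᵥ z| ≤ ∑ i, |v i * z i| := Finset.abs_sum_le_sum_abs _ _
      _ ≤ ∑ _i : Fin n, ‖v‖ * R := by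
          apply Finset.sum_le_sum
          intro i _
          rw [abs_mul]
          have h1 : |v i| ≤ ‖v‖ := norm_le_pi_norm v i
          have h2 : |z i| ≤ R := le_trans (norm_le_pi_norm z i) (hR z hz)
          exact mul_le_mul h1 h2 (abs_nonneg _) (norm_nonneg _)
      _ = (n * R) * ‖v‖ := by
          simp [Finset.sum_const, Finset.card_univ]
          ring
  -- the Legendre-type transform
  set f : (Fin n → ℝ) → ℝ := fun p => sSup ((fun z => p ⬝ᵥ z - u z) '' Ω) with hfdef
  have hne : ∀ p : Fin n → ℝ, ((fun z => p ⬝ᵥ z - u z) '' Ω).Nonempty :=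
    fun p => ⟨_, ⟨x0, hx0, rfl⟩⟩
  have hbdd : ∀ p : Fin n → ℝ, BddAbove ((fun z => p ⬝ᵥ z - u z) '' Ω) := by
    intro p
    refine ⟨(n * R) * ‖p - p0‖ + (p0 ⬝ᵥ x0 - u x0), ?_⟩
    rintro b ⟨z, hz, rfl⟩
    show p ⬝ᵥ z - u z ≤ _
    have h1 := hs0 z hz
    rw [dotProduct_sub] at h1
    have h2 : (p - p0) ⬝ᵥ z ≤ (n * R) * ‖p - p0‖ :=
      le_trans (le_abs_self _) (hdot _ z hz)
    rw [sub_dotProduct] at h2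
    linarith
  -- value of f at subgradient points
  have hfval : ∀ (p x : Fin n → ℝ), x ∈ Ω → (∀ z ∈ Ω, u x + p ⬝ᵥ (z - x) ≤ u z) →
      f p = p ⬝ᵥ x - u x := by
    intro p x hx hsub
    apply le_antisymm
    · apply csSup_le (hne p)
      rintro b ⟨z, hz, rfl⟩
      show p ⬝ᵥ z - u z ≤ _
      have := hsub z hz
      rw [dotProduct_sub] at this
      linarith
    · exact le_csSup (hbdd p) ⟨x, hx, rfl⟩
  -- f is Lipschitz
  have hlip1 : ∀ p q : Fin n → ℝ, f p ≤ f q + (n * R) * ‖p - q‖ := by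
    intro p q
    apply csSup_le (hne p)
    rintro b ⟨z, hz, rfl⟩
    show p ⬝ᵥ z - u z ≤ _
    have h1 : q ⬝ᵥ z - u z ≤ f q := le_csSup (hbdd q) ⟨z, hz, rfl⟩
    have h2 : (p - q) ⬝ᵥ z ≤ (n * R) * ‖p - q‖ :=
      le_trans (le_abs_self _) (hdot _ z hz)
    rw [sub_dotProduct] at h2
    linarith
  have hlip : LipschitzWith (Real.toNNReal (n * R)) f := by
    apply LipschitzWith.of_dist_le_mul
    intro p q
    have hc : (Real.toNNReal (n * R) : ℝ) = n * R := by
      rw [Real.coe_toNNReal]; positivity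
    rw [Real.dist_eq, dist_eq_norm, hc, abs_sub_le_iff]
    have h1 := hlip1 p q
    have h2 := hlip1 q p
    rw [norm_sub_rev q p] at h2
    constructor <;> linarith
  -- the continuous linear map v ↦ x ⬝ᵥ v
  have hCLM : ∀ x : Fin n → ℝ, ∃ L : (Fin n → ℝ) →L[ℝ] ℝ, ∀ v, L v = x ⬝ᵥ v := by
    intro x
    refine ⟨LinearMap.toContinuousLinearMap
      { toFun := fun v => x ⬝ᵥ v
        map_add' := fun a b => dotProduct_add x a b
        map_smul' := fun c a => by simp [dotProduct_smul, smul_eq_mul] }, fun v => rfl⟩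
  -- at a differentiability point with a subgradient x, the derivative is v ↦ x ⬝ᵥ v
  have hkey : ∀ (p x : Fin n → ℝ), DifferentiableAt ℝ f p → x ∈ Ω →
      (∀ z ∈ Ω, u x + p ⬝ᵥ (z - x) ≤ u z) →
      ∀ v, (fderiv ℝ f p) v = x ⬝ᵥ v := by
    intro p x hdf hx hsub v
    obtain ⟨L, hL⟩ := hCLM x
    have hfd : HasFDerivAt (fun q => f q - x ⬝ᵥ q) (fderiv ℝ f p - L) p := by
      have h1 : HasFDerivAt f (fderiv ℝ f p) p := hdf.hasFDerivAt
      have h2 : HasFDerivAt (fun q => x ⬝ᵥ q) L p := by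
        have := L.hasFDerivAt (x := p)
        simpa [funext hL] using this
      exact h1.sub h2
    have hmin : IsLocalMin (fun q => f q - x ⬝ᵥ q) p := by
      apply Filter.Eventually.of_forall
      intro q
      have h1 : q ⬝ᵥ x - u x ≤ f q := le_csSup (hbdd q) ⟨x, hx, rfl⟩
      have h2 : f p = p ⬝ᵥ x - u x := hfval p x hx hsub
      have h3 : q ⬝ᵥ x = x ⬝ᵥ q := dotProduct_comm q x
      have h4 : p ⬝ᵥ x = x ⬝ᵥ p := dotProduct_comm p x
      simp only
      linarith
    have hz : fderiv ℝ f p - L = 0 := hmin.hasFDerivAt_eq_zero hfd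
    have : fderiv ℝ f p = L := by
      have := sub_eq_zero.mp hz
      exact this
    rw [this, hL]
  -- S is contained in the non-differentiability set
  have hsub : S ⊆ {p : Fin n → ℝ | ¬ DifferentiableAt ℝ f p} := by
    rintro p ⟨x, hx, y, hy, hxy, hsx, hsy⟩
    intro hdf
    apply hxy
    funext i
    have h1 := hkey p x hdf hx hsx (Pi.single i 1)
    have h2 := hkey p y hdf hy hsy (Pi.single i 1)
    have : x ⬝ᵥ Pi.single i 1 = y ⬝ᵥ Pi.single i 1 := by rw [← h1, ← h2]
    simpa [dotProduct_single] using this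
  have hnull : volume {p : Fin n → ℝ | ¬ DifferentiableAt ℝ f p} = 0 := by
    have := hlip.ae_differentiableAt (μ := volume)
    rwa [MeasureTheory.ae_iff] at this
  exact measure_mono_null hsub hnull
end

section
/- (Pointwise maximum principle for normal mapping) Let Ω ⊂ ℝ^n be a bounded open set and u, v continuous on the closure of Ω. If u ≥ v on ∂Ω and v(x₀) ≥ u(x₀) for some x₀ ∈ Ω, then every subgradient p of v at x₀ is a subgradient of u at some point of Ω, i.e., ∂v(x₀) ⊂ ∂u(Ω). -/
open Matrix

theorem stmt11 {n : ℕ} (Ω : Set (Fin n → ℝ)) (hΩo : IsOpen Ω) (hΩb : Bornology.IsBounded Ω)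
    (u v : (Fin n → ℝ) → ℝ) (hu : ContinuousOn u (closure Ω)) (hv : ContinuousOn v (closure Ω))
    (hbd : ∀ x ∈ frontier Ω, v x ≤ u x) (x₀ : Fin n → ℝ) (hx₀ : x₀ ∈ Ω)
    (hval : u x₀ ≤ v x₀) :
    ∀ p : Fin n → ℝ, (∀ x ∈ closure Ω, v x₀ + p ⬝ᵥ (x - x₀) ≤ v x) →
      ∃ z ∈ Ω, ∀ x ∈ closure Ω, u z + p ⬝ᵥ (x - z) ≤ u x := by
  intro p hp
  set w : (Fin n → ℝ) → ℝ := fun x => u x - (v x₀ + p ⬝ᵥ (x - x₀)) with hw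
  have hwc : ContinuousOn w (closure Ω) := by
    apply hu.sub
    apply Continuous.continuousOn
    simp only [dotProduct]
    exact continuous_const.add (continuous_finset_sum _ fun i _ =>
      continuous_const.mul ((continuous_apply i).sub continuous_const))
  have hcpt : IsCompact (closure Ω) := hΩb.isCompact_closure
  have hne : (closure Ω).Nonempty := ⟨x₀, subset_closure hx₀⟩
  obtain ⟨z, hz, hzmin⟩ := hcpt.exists_isMinOn hne hwc
  -- key algebraic fact: w x ≥ w z implies the subgradient inequality at z
  have key : ∀ z', z' ∈ closure Ω → (∀ x ∈ closure Ω, w z' ≤ w x) →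
      ∀ x ∈ closure Ω, u z' + p ⬝ᵥ (x - z') ≤ u x := by
    intro z' _ hmin x hx
    have := hmin x hx
    simp only [hw] at this
    have hdot : p ⬝ᵥ (x - z') = p ⬝ᵥ (x - x₀) - p ⬝ᵥ (z' - x₀) := by
      rw [← dotProduct_sub]
      congr 1
      abel
    rw [hdot]
    linarith
  have hwx₀ : w x₀ ≤ 0 := by simp [hw, sub_self, hval]
  by_cases h : z ∈ Ω
  · exact ⟨z, h, key z hz (fun x hx => hzmin hx)⟩
  have h : z ∈ frontier Ω := by
    rw [frontier, hΩo.interior_eq]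
    exact ⟨hz, h⟩
  · -- z on frontier: w z ≥ 0, so w x₀ = 0 is also minimal; use x₀
    have hzfr : w z ≥ 0 := by
      have hzc : z ∈ closure Ω := hz
      have := hp z hzc
      have := hbd z h
      simp only [hw]
      linarith
    have hmin0 : ∀ x ∈ closure Ω, w x₀ ≤ w x := by
      intro x hx
      have h1 : w z ≤ w x := hzmin hx
      have h2 : w z ≤ w x₀ := hzmin (subset_closure hx₀)
      linarith
    exact ⟨x₀, hx₀, key x₀ (subset_closure hx₀) hmin0⟩
end

section
/- (Maximum principle for normal mapping) Let Ω ⊂ ℝ^n be a bounded open set and u, v continuous on the closure of Ω with u = v on ∂Ω and v ≥ u in Ω. Then ∂v(Ω) ⊂ ∂u(Ω). -/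
open Matrix

theorem stmt12 {n : ℕ} (Ω : Set (Fin n → ℝ)) (hΩo : IsOpen Ω) (hΩb : Bornology.IsBounded Ω)
    (u v : (Fin n → ℝ) → ℝ) (hu : ContinuousOn u (closure Ω)) (hv : ContinuousOn v (closure Ω))
    (hbd : ∀ x ∈ frontier Ω, u x = v x) (hge : ∀ x ∈ Ω, u x ≤ v x) :
    ∀ x₀ ∈ Ω, ∀ p : Fin n → ℝ, (∀ x ∈ closure Ω, v x₀ + p ⬝ᵥ (x - x₀) ≤ v x) →
      ∃ z ∈ Ω, ∀ x ∈ closure Ω, u z + p ⬝ᵥ (x - z) ≤ u x := by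
  intro x₀ hx₀ p hp
  set ℓ : (Fin n → ℝ) → ℝ := fun x => v x₀ + p ⬝ᵥ (x - x₀) with hℓ
  have hℓcont : Continuous ℓ := by
    have : Continuous fun x : Fin n → ℝ => p ⬝ᵥ (x - x₀) := by
      simp only [dotProduct]
      exact continuous_finset_sum _ fun i _ =>
        continuous_const.mul ((continuous_apply i).sub continuous_const)
    exact continuous_const.add this
  set g : (Fin n → ℝ) → ℝ := fun x => u x - ℓ x with hg
  have hgcont : ContinuousOn g (closure Ω) := hu.sub hℓcont.continuousOn
  have hcomp : IsCompact (closure Ω) := Metric.isCompact_of_isClosed_isBounded isClosed_closure hΩb.closure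
  have hne : (closure Ω).Nonempty := ⟨x₀, subset_closure hx₀⟩
  obtain ⟨z, hz, hzmin⟩ := hcomp.exists_isMinOn hne hgcont
  -- key: difference of plane values
  have hℓdiff : ∀ z x : Fin n → ℝ, ℓ x - ℓ z = p ⬝ᵥ (x - z) := by
    intro z x
    simp only [hℓ, dotProduct_sub]
    ring
  have key : ∀ w, w ∈ Ω → IsMinOn g (closure Ω) w →
      ∀ x ∈ closure Ω, u w + p ⬝ᵥ (x - w) ≤ u x := by
    intro w hw hwmin x hx
    have := hwmin hx
    simp only [hg, Set.mem_setOf_eq] at this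
    have h2 := hℓdiff w x
    linarith
  by_cases hcase : z ∈ Ω
  · exact ⟨z, hcase, key z hcase hzmin⟩
  · -- z is on the frontier, so g z ≥ 0, hence g x₀ = 0 and x₀ is a minimizer
    have hzfr : z ∈ frontier Ω := by
      rw [hΩo.frontier_eq]
      exact ⟨hz, hcase⟩
    have hgz : 0 ≤ g z := by
      have h1 : u z = v z := hbd z hzfr
      have h2 : ℓ z ≤ v z := hp z hz
      simp only [hg]
      linarith
    have hgx₀ : g x₀ ≤ 0 := by
      have : u x₀ ≤ v x₀ := hge x₀ hx₀
      simp only [hg, hℓ]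
      have : p ⬝ᵥ (x₀ - x₀) = 0 := by simp
      simp only [this]
      linarith [hge x₀ hx₀]
    have hx₀min : IsMinOn g (closure Ω) x₀ := by
      intro x hx
      have := hzmin hx
      simp only [Set.mem_setOf_eq] at this ⊢
      calc g x₀ ≤ 0 := hgx₀
        _ ≤ g z := hgz
        _ ≤ g x := this
    exact ⟨x₀, hx₀, key x₀ hx₀ hx₀min⟩
end
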